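/- If v = (v_1, ..., v_{n+1}) is a non-negative, non-increasing GMS integer vector, then f_v(t) = F_v(t) for every integer t ≥ 0. -/

import Mathlib

/-- Extended binomial coefficient `binom(x,1) = max x 0`. -/
def binom1 (x : ℤ) : ℤ := max x 0

/-- Extended binomial coefficient `binom(x,2) = x(x-1)/2` for `x ≥ 0`, else `0`. -/
def binom2 (x : ℤ) : ℤ := if 0 ≤ x then x * (x - 1) / 2 else 0

/-- `f_v(t)` for a vector `v = (v_1, …, v_{n+1})` given 0-indexed by `v : ℕ → ℤ`. -/
def fLow (n : ℕ) (v : ℕ → ℤ) (t : ℤ) : ℤ :=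
  ∑ i ∈ Finset.range (n + 1), binom1 (min (t - i + 1) (v i))

/-- `F_v(t)` for a vector `v = (v_1, …, v_{n+1})` given 0-indexed by `v : ℕ → ℤ`. -/
def FUpp (n : ℕ) (v : ℕ → ℤ) (t : ℤ) : ℤ :=
  Finset.inf' (Finset.range (n + 2)) (by simp) fun i =>
    binom2 (t + 2) - binom2 (t - i + 2) + ∑ j ∈ Finset.Ico i (n + 1), v j

lemma binom2_succ (x : ℤ) : binom2 (x + 1) = binom2 x + binom1 x := by
  obtain ⟨c, hc⟩ := Int.even_mul_succ_self (x - 1)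
  have hc2 : x * (x - 1) = 2 * c := by
    have h : (x - 1) * (x - 1 + 1) = x * (x - 1) := by ring
    linarith [hc, h]
  have e1 : x * (x - 1) / 2 = c := by
    rw [hc2]; exact Int.mul_ediv_cancel_left _ (by norm_num)
  have hc3 : (x + 1) * (x + 1 - 1) = 2 * (c + x) := by
    have h : (x + 1) * (x + 1 - 1) = x * (x - 1) + 2 * x := by ring
    rw [h, hc2]; ring
  have e2 : (x + 1) * (x + 1 - 1) / 2 = c + x := by
    rw [hc3]; exact Int.mul_ediv_cancel_left _ (by norm_num)
  unfold binom2 binom1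
  rcases le_or_gt 0 x with h | h
  · rw [if_pos (by omega), if_pos h, e1, e2, max_eq_left h]
  · have hx1 : x ≤ -1 := by omega
    rcases eq_or_lt_of_le hx1 with h1 | h1
    · subst h1; norm_num
    · rw [if_neg (by omega), if_neg (by omega), max_eq_right h.le]; ring

lemma binom2_sum (t : ℤ) (i : ℕ) :
    binom2 (t + 2) - binom2 (t - i + 2) = ∑ k ∈ Finset.range i, binom1 (t - k + 1) := by
  induction i with
  | zero => simp
  | succ m ih =>
    rw [Finset.sum_range_succ, ← ih]
    have h1 : t - ((m + 1 : ℕ) : ℤ) + 2 = t - (m : ℤ) + 1 := by push_cast; ring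
    have h2 : binom2 (t - (m : ℤ) + 2) = binom2 (t - (m : ℤ) + 1) + binom1 (t - (m : ℤ) + 1) := by
      rw [show t - (m : ℤ) + 2 = (t - (m : ℤ) + 1) + 1 by ring, binom2_succ]
    rw [h1, h2]
    ring

theorem fLow_eq_FUpp_of_gms (n : ℕ) (v : ℕ → ℤ)
    (hnonneg : ∀ i, i ≤ n → 0 ≤ v i)
    (hnoninc : ∀ i, i + 1 ≤ n → v (i + 1) ≤ v i)
    (hgms : ∀ i j : ℕ, i < j → j ≤ n → v i - v j ≥ (j : ℤ) - (i : ℤ) - 1) :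
    ∀ t : ℤ, 0 ≤ t → fLow n v t = FUpp n v t := by
  intro t ht
  classical
  set a : ℕ → ℤ := fun k => binom1 (t - k + 1) with ha
  -- f as a sum of mins
  have hfl : fLow n v t = ∑ i ∈ Finset.range (n + 1), min (a i) (v i) := by
    unfold fLow
    refine Finset.sum_congr rfl fun i hi => ?_
    have hv : 0 ≤ v i := hnonneg i (Nat.lt_succ_iff.mp (Finset.mem_range.mp hi))
    simp only [ha, binom1]
    omega
  -- the candidate terms of F
  have hg : ∀ i : ℕ,
      binom2 (t + 2) - binom2 (t - i + 2) + ∑ j ∈ Finset.Ico i (n + 1), v j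
        = ∑ k ∈ Finset.range i, a k + ∑ j ∈ Finset.Ico i (n + 1), v j := by
    intro i; rw [binom2_sum]
  apply le_antisymm
  · -- f ≤ every candidate
    apply Finset.le_inf'
    intro i hi
    have hin : i ≤ n + 1 := Nat.lt_succ_iff.mp (Finset.mem_range.mp hi)
    rw [hg i, hfl, ← Finset.sum_range_add_sum_Ico _ hin]
    gcongr with k hk
    · exact min_le_left _ _
    · exact min_le_right _ _
  · -- some candidate equals f
    set T := (Finset.range (n + 1)).filter (fun k => a k < v k) with hT
    by_cases hTe : T.Nonempty
    · set m := T.max' hTe with hm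
      have hmmem : m ∈ T := T.max'_mem hTe
      have hmn : m ≤ n := by
        have := (Finset.mem_filter.mp hmmem).1
        exact Nat.lt_succ_iff.mp (Finset.mem_range.mp this)
      have hmv : a m < v m := (Finset.mem_filter.mp hmmem).2
      have key1 : ∀ k, k < m + 1 → a k ≤ v k := by
        intro k hk
        rcases eq_or_lt_of_le (Nat.lt_succ_iff.mp hk) with rfl | hkm
        · exact hmv.le
        · have hgms' := hgms k m hkm hmn
          have hlip : a k ≤ a m + ((m : ℤ) - k) := by
            simp only [ha, binom1]
            have : (k : ℤ) < m := by exact_mod_cast hkm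
            omega
          linarith
      have key2 : ∀ k, m + 1 ≤ k → k ≤ n → v k ≤ a k := by
        intro k h1 h2
        by_contra h
        push_neg at h
        have hkT : k ∈ T := Finset.mem_filter.mpr ⟨Finset.mem_range.mpr (by omega), h⟩
        have := T.le_max' k hkT
        omega
      have hmem : m + 1 ∈ Finset.range (n + 2) := Finset.mem_range.mpr (by omega)
      refine le_trans (Finset.inf'_le _ hmem) ?_
      rw [hg (m + 1), hfl, ← Finset.sum_range_add_sum_Ico _ (show m + 1 ≤ n + 1 by omega)]
      have h1 : ∑ k ∈ Finset.range (m + 1), a k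
          = ∑ k ∈ Finset.range (m + 1), min (a k) (v k) := by
        refine Finset.sum_congr rfl fun k hk => ?_
        exact (min_eq_left (key1 k (Finset.mem_range.mp hk))).symm
      have h2 : ∑ j ∈ Finset.Ico (m + 1) (n + 1), v j
          = ∑ j ∈ Finset.Ico (m + 1) (n + 1), min (a j) (v j) := by
        refine Finset.sum_congr rfl fun j hj => ?_
        obtain ⟨hj1, hj2⟩ := Finset.mem_Ico.mp hj
        exact (min_eq_right (key2 j hj1 (by omega))).symm
      rw [h1, h2]
    · -- no index with a k < v k : the term at i = 0 works
      have hall : ∀ k, k ≤ n → v k ≤ a k := by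
        intro k hk
        by_contra h
        push_neg at h
        exact hTe ⟨k, Finset.mem_filter.mpr ⟨Finset.mem_range.mpr (by omega), h⟩⟩
      have hmem : 0 ∈ Finset.range (n + 2) := Finset.mem_range.mpr (by omega)
      refine le_trans (Finset.inf'_le _ hmem) ?_
      rw [hg 0, hfl]
      simp only [Finset.range_zero, Finset.sum_empty, zero_add]
      rw [Finset.range_eq_Ico]
      refine le_of_eq (Finset.sum_congr rfl fun k hk => ?_).symm
      obtain ⟨_, hk2⟩ := Finset.mem_Ico.mp hk
      exact min_eq_right (hall k (by omega))
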